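/- Let G^{Init} be a rooted binary tree and 𝒢 a set of pairwise separated subtrees covering all leaves. Let x be a node of G^{Init} such that both child subtrees G^{Init}[x_l] and G^{Init}[x_r] each contain at least two trees of 𝒢. Then in any triplet-respecting supertree G^{TR} for 𝒢, the node y with L(y) = L(x) induces exactly the bipartition (L(x_l), L(x_r)): that is, {L(y_l), L(y_r)} = {L(x_l), L(x_r)}. -/

import Mathlib

inductive BTree (α : Type) where
  | leaf : α → BTree α
  | node : BTree α → BTree α → BTree α
deriving DecidableEq

namespace BTree

variable {α : Type} [DecidableEq α] {σ : Type} [DecidableEq σ] {γ : Type} [DecidableEq γ]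

/-- leaf (label) set of a tree -/
def leaves : BTree α → Finset α
  | leaf a => {a}
  | node l r => leaves l ∪ leaves r

/-- the leaf labels are pairwise distinct -/
def nodupLeaves : BTree α → Prop
  | leaf _ => True
  | node l r => nodupLeaves l ∧ nodupLeaves r ∧ Disjoint (leaves l) (leaves r)

/-- the (unordered) bipartition `(Ll, Lr)` is compatible with the tree:
the whole leaf set lies in one part, or the leaf sets of the two root child
subtrees lie in opposite parts. -/
def compatible : BTree α → Finset α → Finset α → Prop
  | leaf a, Ll, Lr => a ∈ Ll ∨ a ∈ Lr
  | node l r, Ll, Lr =>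
      leaves l ∪ leaves r ⊆ Ll ∨ leaves l ∪ leaves r ⊆ Lr ∨
      (leaves l ⊆ Ll ∧ leaves r ⊆ Lr) ∨ (leaves l ⊆ Lr ∧ leaves r ⊆ Ll)

/-- union of the leaf sets of a list of trees -/
def unionLeaves (Gs : List (BTree α)) : Finset α :=
  Gs.foldr (fun g acc => leaves g ∪ acc) ∅

/-- `(Ll, Lr)` is a bipartition of the union of the leaf sets (both parts
nonempty) compatible with every tree in the list. -/
def isCompBip (Gs : List (BTree α)) (Ll Lr : Finset α) : Prop :=
  Ll ∪ Lr = unionLeaves Gs ∧ Disjoint Ll Lr ∧ Ll.Nonempty ∧ Lr.Nonempty ∧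
    ∀ G ∈ Gs, compatible G Ll Lr

/-- restriction `G|_L` : remove the leaves not in `L` and suppress the
resulting degree-2 nodes; `none` if no leaf of `G` lies in `L`. -/
def restrict : BTree α → Finset α → Option (BTree α)
  | leaf a, L => if a ∈ L then some (leaf a) else none
  | node l r, L =>
      match restrict l L, restrict r L with
      | some l', some r' => some (node l' r')
      | some l', none => some l'
      | none, some r' => some r'
      | none, none => none

/-- isomorphism of rooted leaf-labeled trees (children are unordered) -/
inductive Iso : BTree α → BTree α → Prop
  | leaf (a : α) : Iso (leaf a) (leaf a)
  | node {l r l' r' : BTree α} : Iso l l' → Iso r r' → Iso (node l r) (node l' r')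
  | swap {l r l' r' : BTree α} : Iso l r' → Iso r l' → Iso (node l r) (node l' r')

/-- `G` displays `G'` : the restriction of `G` to the leaves of `G'` is
isomorphic to `G'` (preserving leaf labels). -/
def displays (G G' : BTree α) : Prop :=
  ∃ t, restrict G (leaves G') = some t ∧ Iso t G'

/-- `Subtree t T` : `t` is a complete rooted subtree of `T` (i.e. `t = T[x]`
for some node `x` of `T`).  Equivalently, the root of `T` is a (weak)
ancestor of the root of `t`. -/
inductive Subtree : BTree α → BTree α → Prop
  | refl (t : BTree α) : Subtree t t
  | left {t l r : BTree α} : Subtree t l → Subtree t (node l r)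
  | right {t l r : BTree α} : Subtree t r → Subtree t (node l r)

/-- two nodes (complete subtrees) are separated: neither is a (weak)
ancestor of the other -/
def separated (u v : BTree α) : Prop := ¬ Subtree u v ∧ ¬ Subtree v u

/-- the subtree rooted at the lowest common ancestor of the leaf set `L` -/
def lcaSub : BTree α → Finset α → BTree α
  | leaf a, _ => leaf a
  | node l r, L =>
      if L ⊆ leaves l then lcaSub l L
      else if L ⊆ leaves r then lcaSub r L
      else node l r

/-- `T1` and `T2` induce the same rooted triplet topology on `{a, b, c}` -/
def sameTriplet (T1 T2 : BTree α) (a b c : α) : Prop :=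
  ∃ t1 t2, restrict T1 {a, b, c} = some t1 ∧ restrict T2 {a, b, c} = some t2 ∧ Iso t1 t2

/-- `GTR` is triplet respecting w.r.t. `GInit` and the family `Gs` : for any
three leaves taken from three distinct trees of `Gs`, `GInit` and `GTR`
induce the same rooted triplet topology. -/
def tripletRespecting (GInit GTR : BTree α) (Gs : List (BTree α)) : Prop :=
  ∀ G1 ∈ Gs, ∀ G2 ∈ Gs, ∀ G3 ∈ Gs, G1 ≠ G2 → G1 ≠ G3 → G2 ≠ G3 →
    ∀ a ∈ leaves G1, ∀ b ∈ leaves G2, ∀ c ∈ leaves G3, sameTriplet GInit GTR a b c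

/-- at least two (distinct) trees of `Gs` are subtrees of `t` : `|𝒢(t)| ≥ 2` -/
def atLeastTwo (Gs : List (BTree α)) (t : BTree α) : Prop :=
  ∃ Gi ∈ Gs, ∃ Gj ∈ Gs, Gi ≠ Gj ∧ Subtree Gi t ∧ Subtree Gj t

/-- `Graft T' T R` : `R` is obtained from `T` by grafting `T'` at some node
`x*` of `T`, i.e. subdividing the edge above `x*` (or adding a new root if
`x*` is the root) and attaching `T'` as the new sibling of `x*`. -/
inductive Graft (T' : BTree α) : BTree α → BTree α → Prop
  | atRootL (T : BTree α) : Graft T' T (node T' T)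
  | atRootR (T : BTree α) : Graft T' T (node T T')
  | left {l r g : BTree α} : Graft T' l g → Graft T' (node l r) (node g r)
  | right {l r g : BTree α} : Graft T' r g → Graft T' (node l r) (node l g)

/-- number of edges from the root of `u` down to the node `v`, if `v` is a
node (complete subtree) of `u` -/
def edist : BTree σ → BTree σ → Option ℕ
  | leaf a, v => if leaf a = v then some 0 else none
  | node l r, v =>
      if node l r = v then some 0 else
      match edist l v, edist r v with
      | some n, _ => some (n + 1)
      | none, some n => some (n + 1)
      | none, none => none

/-- number of nodes strictly between an ancestor `u` and a descendant `v` -/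
def inter (u v : BTree σ) : ℕ := (edist u v).getD 1 - 1

/-- node (`lca`) of the species tree `S` associated to a set `L` of genes -/
def specOf (S : BTree σ) (s : γ → σ) (L : Finset γ) : BTree σ := lcaSub S (L.image s)

/-- the species-tree node `s(x)` associated with a gene-tree node `x`
(lca of the species of the leaves below `x`) -/
def spec (S : BTree σ) (s : γ → σ) (t : BTree γ) : BTree σ := specOf S s (leaves t)

/-- the local LCA-reconciliation cost of a node whose own mapping is `su`
and whose children map to `sl` and `sr` -/
def localCost (su sl sr : BTree σ) : ℕ :=
  inter su sl + inter su sr +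
    (if su = sl ∧ su = sr then 1 else if su = sl ∨ su = sr then 2 else 0)

/-- number of duplication nodes of the LCA-reconciliation -/
def dupCount (S : BTree σ) (s : γ → σ) : BTree γ → ℕ
  | leaf _ => 0
  | node l r =>
      dupCount S s l + dupCount S s r +
      (if spec S s (node l r) = spec S s l ∨ spec S s (node l r) = spec S s r then 1 else 0)

/-- minimum number of losses of the LCA-reconciliation: for each edge `(x,c)`,
`inter(s(x), s(c))` losses, plus one more loss for each child `c` of a
duplication node `x` with `s(c) ≠ s(x)` -/
def lossCount (S : BTree σ) (s : γ → σ) : BTree γ → ℕ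
  | leaf _ => 0
  | node l r =>
      lossCount S s l + lossCount S s r +
      (if spec S s (node l r) = spec S s l ∨ spec S s (node l r) = spec S s r then
        (inter (spec S s (node l r)) (spec S s l) +
          if spec S s l = spec S s (node l r) then 0 else 1) +
        (inter (spec S s (node l r)) (spec S s r) +
          if spec S s r = spec S s (node l r) then 0 else 1)
      else
        inter (spec S s (node l r)) (spec S s l) + inter (spec S s (node l r)) (spec S s r))

/-- sum over all internal nodes of the local LCA-reconciliation costs -/
def totalLocal (S : BTree σ) (s : γ → σ) : BTree γ → ℕ
  | leaf _ => 0
  | node l r =>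
      totalLocal S s l + totalLocal S s r +
      localCost (spec S s (node l r)) (spec S s l) (spec S s r)

/-- `G` is a supertree for `Gs` : a tree on the union of the leaf sets
(each leaf once) displaying every tree of `Gs` -/
def isSupertree (Gs : List (BTree γ)) (G : BTree γ) : Prop :=
  leaves G = unionLeaves Gs ∧ nodupLeaves G ∧ ∀ Gi ∈ Gs, displays G Gi

/-- `MinSGT` : minimum LCA-reconciliation cost over all supertrees -/
noncomputable def reconMin (S : BTree σ) (s : γ → σ) (Gs : List (BTree γ)) : ℕ :=
  sInf {c | ∃ G : BTree γ, isSupertree Gs G ∧ totalLocal S s G = c}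

/-- restrictions `G_i|_L` of the trees of the list (dropping empty ones) -/
def restrictList (Gs : List (BTree γ)) (L : Finset γ) : List (BTree γ) :=
  Gs.filterMap fun G => restrict G L

/-- the four possible ordered choices for distributing a tree into the two
parts of a bipartition: whole tree left, whole tree right, left subtree
left & right subtree right, left subtree right & right subtree left -/
def pick : BTree α → ℕ → Finset α × Finset α
  | G, 0 => (leaves G, ∅)
  | G, 1 => (∅, leaves G)
  | node l r, 2 => (leaves l, leaves r)
  | node l r, _ => (leaves r, leaves l)
  | G, _ => (∅, leaves G)

/-- left part produced by a distribution `f` of choices -/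
def partsLeft (Gs : List (BTree α)) (f : Fin Gs.length → Fin 4) : Finset α :=
  Finset.univ.biUnion fun i => (pick (Gs.get i) (f i).val).1

/-- right part produced by a distribution `f` of choices -/
def partsRight (Gs : List (BTree α)) (f : Fin Gs.length → Fin 4) : Finset α :=
  Finset.univ.biUnion fun i => (pick (Gs.get i) (f i).val).2

/-- the complete subtree at a position (path from the root) -/
def subtreeAt : BTree α → List Bool → Option (BTree α)
  | t, [] => some t
  | leaf _, _ :: _ => none
  | node l _, false :: p => subtreeAt l p
  | node _ r, true :: p => subtreeAt r p

/-- the set of positions of internal nodes -/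
def internalPos : BTree α → Finset (List Bool)
  | leaf _ => ∅
  | node l r =>
      insert [] ((internalPos l).image (List.cons false) ∪
        (internalPos r).image (List.cons true))

end BTree

/-- labeled gene trees: each internal node carries `true` (Dup) or `false` (Spec) -/
inductive LTree (α : Type) where
  | leaf : α → LTree α
  | node : Bool → LTree α → LTree α → LTree α
deriving DecidableEq

namespace LTree

variable {α : Type} [DecidableEq α]

def leaves : LTree α → Finset α
  | leaf a => {a}
  | node _ l r => leaves l ∪ leaves r

/-- underlying unlabeled tree -/
def shape : LTree α → BTree α
  | leaf a => BTree.leaf a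
  | node _ l r => BTree.node (shape l) (shape r)

/-- the event label of the root (`none` for a leaf) -/
def rootEv : LTree α → Option Bool
  | leaf _ => none
  | node e _ _ => some e

inductive Subtree : LTree α → LTree α → Prop
  | refl (t : LTree α) : Subtree t t
  | left {t l r : LTree α} {e : Bool} : Subtree t l → Subtree t (node e l r)
  | right {t l r : LTree α} {e : Bool} : Subtree t r → Subtree t (node e l r)

/-- the subtree rooted at the lowest common ancestor of the leaf set `L` -/
def lcaSub : LTree α → Finset α → LTree α
  | leaf a, _ => leaf a
  | node e l r, L =>
      if L ⊆ leaves l then lcaSub l L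
      else if L ⊆ leaves r then lcaSub r L
      else node e l r

/-- `G` displays `G'` (topologically, ignoring labels) -/
def displaysL (G G' : LTree α) : Prop := BTree.displays (shape G) (shape G')

/-- `(G, ev_G)` is label-compatible with `(G', ev_{G'})` : every internal
node `x'` of `G'` has the same event label as `lca_G(L(x'))` -/
def labelCompatible (G G' : LTree α) : Prop :=
  ∀ (e : Bool) (l r : LTree α), Subtree (node e l r) G' →
    rootEv (lcaSub G (leaves (node e l r))) = some e

end LTree

namespace BTree

variable {α : Type} [DecidableEq α]

theorem aux_leaves_nonempty (t : BTree α) : t.leaves.Nonempty := by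
  induction t with
  | leaf a => exact ⟨a, by simp [leaves]⟩
  | node l r ihl ihr =>
    obtain ⟨a, ha⟩ := ihl
    exact ⟨a, by simp [leaves, ha]⟩

theorem aux_subtree_leaves {u t : BTree α} (h : Subtree u t) : u.leaves ⊆ t.leaves := by
  induction h with
  | refl => exact Finset.Subset.refl _
  | left h ih => exact ih.trans (by simp [leaves])
  | right h ih => exact ih.trans (by simp [leaves])

theorem aux_nodup_subtree {u t : BTree α} (h : Subtree u t) :
    t.nodupLeaves → u.nodupLeaves := by
  induction h with
  | refl => exact id
  | left h ih => exact fun hnd => ih hnd.1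
  | right h ih => exact fun hnd => ih hnd.2.1

theorem aux_iso_leaves {t1 t2 : BTree α} (h : Iso t1 t2) : t1.leaves = t2.leaves := by
  induction h with
  | leaf a => rfl
  | node h1 h2 ih1 ih2 => simp [leaves, ih1, ih2]
  | swap h1 h2 ih1 ih2 => simp [leaves, ih1, ih2, Finset.union_comm]

theorem aux_iso_parts {tl tr ul ur : BTree α} (h : Iso (node tl tr) (node ul ur)) :
    (tl.leaves = ul.leaves ∧ tr.leaves = ur.leaves) ∨
    (tl.leaves = ur.leaves ∧ tr.leaves = ul.leaves) := by
  cases h with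
  | node h1 h2 => exact Or.inl ⟨aux_iso_leaves h1, aux_iso_leaves h2⟩
  | swap h1 h2 => exact Or.inr ⟨aux_iso_leaves h1, aux_iso_leaves h2⟩

theorem aux_restrict_none_iff (G : BTree α) (L : Finset α) :
    restrict G L = none ↔ Disjoint G.leaves L := by
  induction G with
  | leaf a =>
    by_cases h : a ∈ L <;>
      simp [restrict, leaves, h, Finset.disjoint_singleton_left]
  | node l r ihl ihr =>
    cases hl : restrict l L <;> cases hr : restrict r L <;>
      simp_all [restrict, leaves, Finset.disjoint_union_left]

theorem aux_restrict_leaves {G : BTree α} {L : Finset α} :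
    ∀ {t}, restrict G L = some t → t.leaves = G.leaves ∩ L := by
  induction G with
  | leaf a =>
    intro t h
    by_cases ha : a ∈ L <;> simp [restrict, ha] at h
    subst h
    simp [leaves]
    ext x
    simp [Finset.mem_inter]
    rintro rfl; exact ha
  | node l r ihl ihr =>
    intro t h
    cases hl : restrict l L <;> cases hr : restrict r L <;>
        simp only [restrict, hl, hr, Option.some.injEq, reduceCtorEq] at h
    · subst h
      have h0 : l.leaves ∩ L = ∅ :=
        Finset.disjoint_iff_inter_eq_empty.1 ((aux_restrict_none_iff l L).1 hl)
      rw [ihr hr]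
      show r.leaves ∩ L = (l.leaves ∪ r.leaves) ∩ L
      rw [Finset.union_inter_distrib_right, h0, Finset.empty_union]
    · subst h
      have h0 : r.leaves ∩ L = ∅ :=
        Finset.disjoint_iff_inter_eq_empty.1 ((aux_restrict_none_iff r L).1 hr)
      rw [ihl hl]
      show l.leaves ∩ L = (l.leaves ∪ r.leaves) ∩ L
      rw [Finset.union_inter_distrib_right, h0, Finset.union_empty]
    · subst h
      show (_ ∪ _) = (l.leaves ∪ r.leaves) ∩ L
      rw [ihl hl, ihr hr, Finset.union_inter_distrib_right]

theorem aux_restrict_isSome (G : BTree α) (L : Finset α)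
    (h : (G.leaves ∩ L).Nonempty) : ∃ t, restrict G L = some t := by
  cases hc : restrict G L with
  | none =>
    exfalso
    rw [aux_restrict_none_iff] at hc
    rw [Finset.disjoint_iff_inter_eq_empty.1 hc] at h
    exact Finset.not_nonempty_empty h
  | some t => exact ⟨t, rfl⟩

theorem aux_restrict_subtree {u T : BTree α} (h : Subtree u T) :
    T.nodupLeaves → ∀ L : Finset α, L ⊆ u.leaves → restrict T L = restrict u L := by
  induction h with
  | refl => intro _ L _; rfl
  | @left l r h ih =>
    intro hnd L hL
    have hd : Disjoint r.leaves L :=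
      hnd.2.2.symm.mono_right (hL.trans (aux_subtree_leaves h))
    have hrn : restrict r L = none := (aux_restrict_none_iff r L).2 hd
    have hl := ih hnd.1 L hL
    cases hc : restrict l L <;> simp only [restrict, hc, hrn] <;> rw [← hl, hc]
  | @right l r h ih =>
    intro hnd L hL
    have hd : Disjoint l.leaves L :=
      hnd.2.2.mono_right (hL.trans (aux_subtree_leaves h))
    have hrn : restrict l L = none := (aux_restrict_none_iff l L).2 hd
    have hr := ih hnd.2.1 L hL
    cases hc : restrict r L <;> simp only [restrict, hc, hrn] <;> rw [← hr, hc]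

theorem aux_restrict_split (T P Q : BTree α) (hnd : T.nodupLeaves)
    (hsub : Subtree (node P Q) T) (S : Finset α) (hS : S ⊆ P.leaves ∪ Q.leaves)
    (h1 : (P.leaves ∩ S).Nonempty) (h2 : (Q.leaves ∩ S).Nonempty) :
    ∃ tl tr, restrict T S = some (node tl tr) ∧
      tl.leaves = P.leaves ∩ S ∧ tr.leaves = Q.leaves ∩ S := by
  obtain ⟨tl, htl⟩ := aux_restrict_isSome P S h1
  obtain ⟨tr, htr⟩ := aux_restrict_isSome Q S h2
  refine ⟨tl, tr, ?_, aux_restrict_leaves htl, aux_restrict_leaves htr⟩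
  rw [aux_restrict_subtree hsub hnd S hS]
  simp [restrict, htl, htr]

theorem aux_nested_or_disjoint : ∀ (T u v : BTree α), T.nodupLeaves →
    Subtree u T → Subtree v T →
    Subtree u v ∨ Subtree v u ∨ Disjoint u.leaves v.leaves := by
  intro T
  induction T with
  | leaf a =>
    intro u v _ hu hv
    cases hu; cases hv
    exact Or.inl (Subtree.refl _)
  | node l r ihl ihr =>
    intro u v hnd hu hv
    cases hu with
    | refl => exact Or.inr (Or.inl hv)
    | left hu' =>
      cases hv with
      | refl => exact Or.inl (Subtree.left hu')
      | left hv' => exact ihl u v hnd.1 hu' hv'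
      | right hv' =>
        exact Or.inr (Or.inr (hnd.2.2.mono
          (aux_subtree_leaves hu') (aux_subtree_leaves hv')))
    | right hu' =>
      cases hv with
      | refl => exact Or.inl (Subtree.right hu')
      | left hv' =>
        exact Or.inr (Or.inr (hnd.2.2.symm.mono
          (aux_subtree_leaves hu') (aux_subtree_leaves hv')))
      | right hv' => exact ihr u v hnd.2.1 hu' hv'

theorem aux_mem_unionLeaves {a : α} : ∀ {Gs : List (BTree α)},
    a ∈ unionLeaves Gs ↔ ∃ G ∈ Gs, a ∈ G.leaves := by
  intro Gs
  induction Gs with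
  | nil => simp [unionLeaves]
  | cons g gs ih =>
    constructor
    · intro h
      rcases Finset.mem_union.1 h with h | h
      · exact ⟨g, by simp, h⟩
      · obtain ⟨G, hG, hGa⟩ := ih.1 h
        exact ⟨G, by simp [hG], hGa⟩
    · rintro ⟨G, hG, hGa⟩
      rcases List.mem_cons.1 hG with rfl | hG
      · exact Finset.mem_union_left _ hGa
      · exact Finset.mem_union_right _ (ih.2 ⟨G, hG, hGa⟩)

theorem aux_key_contra (GInit GTR xl xr yl yr : BTree α)
    (hndI : GInit.nodupLeaves) (hndT : GTR.nodupLeaves)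
    (hx : Subtree (node xl xr) GInit) (hy : Subtree (node yl yr) GTR)
    (a b c : α)
    (hvar : (a ∈ xl.leaves ∧ b ∈ xl.leaves ∧ c ∈ xr.leaves) ∨
            (a ∈ xr.leaves ∧ b ∈ xr.leaves ∧ c ∈ xl.leaves))
    (hayl : a ∈ yl.leaves) (hbyr : b ∈ yr.leaves)
    (hcy : c ∈ yl.leaves ∪ yr.leaves)
    (hst : sameTriplet GInit GTR a b c) : False := by
  have haS : a ∈ ({a, b, c} : Finset α) := by simp
  have hbS : b ∈ ({a, b, c} : Finset α) := by simp
  have hcS : c ∈ ({a, b, c} : Finset α) := by simp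
  have hDy : Disjoint yl.leaves yr.leaves := (aux_nodup_subtree hy hndT).2.2
  have hSy : ({a, b, c} : Finset α) ⊆ yl.leaves ∪ yr.leaves := by
    intro t ht
    simp only [Finset.mem_insert, Finset.mem_singleton] at ht
    rcases ht with rfl | rfl | rfl
    · exact Finset.mem_union_left _ hayl
    · exact Finset.mem_union_right _ hbyr
    · exact hcy
  have hSx : ({a, b, c} : Finset α) ⊆ xl.leaves ∪ xr.leaves := by
    intro t ht
    simp only [Finset.mem_insert, Finset.mem_singleton] at ht
    rcases hvar with ⟨h1, h2, h3⟩ | ⟨h1, h2, h3⟩ <;>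
      rcases ht with rfl | rfl | rfl <;> simp [h1, h2, h3]
  obtain ⟨ul, ur, hrT, hul, hur⟩ := aux_restrict_split GTR yl yr hndT hy _ hSy
    ⟨a, Finset.mem_inter.2 ⟨hayl, haS⟩⟩ ⟨b, Finset.mem_inter.2 ⟨hbyr, hbS⟩⟩
  have hfin : ∀ w : BTree α, w.leaves = ul.leaves ∨ w.leaves = ur.leaves →
      a ∈ w.leaves → b ∈ w.leaves → False := by
    intro w hw haw hbw
    rcases hw with hw | hw
    · have hb' : b ∈ yl.leaves := by
        have := hw ▸ hbw
        rw [hul] at this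
        exact (Finset.mem_inter.1 this).1
      exact Finset.disjoint_left.1 hDy hb' hbyr
    · have ha' : a ∈ yr.leaves := by
        have := hw ▸ haw
        rw [hur] at this
        exact (Finset.mem_inter.1 this).1
      exact Finset.disjoint_left.1 hDy hayl ha'
  obtain ⟨t1, t2, h1, h2, hiso⟩ := hst
  rcases hvar with ⟨ha1, hb1, hc1⟩ | ⟨ha1, hb1, hc1⟩
  · obtain ⟨tl, tr, hrI, htl, htr⟩ := aux_restrict_split GInit xl xr hndI hx _ hSx
      ⟨a, Finset.mem_inter.2 ⟨ha1, haS⟩⟩ ⟨c, Finset.mem_inter.2 ⟨hc1, hcS⟩⟩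
    rw [h1] at hrI; rw [h2] at hrT
    obtain rfl := Option.some.inj hrI
    obtain rfl := Option.some.inj hrT
    have hatl : a ∈ tl.leaves := by rw [htl]; exact Finset.mem_inter.2 ⟨ha1, haS⟩
    have hbtl : b ∈ tl.leaves := by rw [htl]; exact Finset.mem_inter.2 ⟨hb1, hbS⟩
    rcases aux_iso_parts hiso with ⟨p1, p2⟩ | ⟨p1, p2⟩
    · exact hfin tl (Or.inl p1) hatl hbtl
    · exact hfin tl (Or.inr p1) hatl hbtl
  · obtain ⟨tl, tr, hrI, htl, htr⟩ := aux_restrict_split GInit xl xr hndI hx _ hSx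
      ⟨c, Finset.mem_inter.2 ⟨hc1, hcS⟩⟩ ⟨a, Finset.mem_inter.2 ⟨ha1, haS⟩⟩
    rw [h1] at hrI; rw [h2] at hrT
    obtain rfl := Option.some.inj hrI
    obtain rfl := Option.some.inj hrT
    have hatr : a ∈ tr.leaves := by rw [htr]; exact Finset.mem_inter.2 ⟨ha1, haS⟩
    have hbtr : b ∈ tr.leaves := by rw [htr]; exact Finset.mem_inter.2 ⟨hb1, hbS⟩
    rcases aux_iso_parts hiso with ⟨p1, p2⟩ | ⟨p1, p2⟩
    · exact hfin tr (Or.inr p2) hatr hbtr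
    · exact hfin tr (Or.inl p2) hatr hbtr

theorem aux_bucket (GInit : BTree α) (Gs : List (BTree α)) (hndI : GInit.nodupLeaves)
    (hsub : ∀ Gi ∈ Gs, Subtree Gi GInit)
    (hdisj' : ∀ Gi ∈ Gs, ∀ Gj ∈ Gs, Gi ≠ Gj → Disjoint Gi.leaves Gj.leaves)
    (P Q : BTree α) (hx : Subtree (node P Q) GInit)
    (h2 : atLeastTwo Gs Q) (Gi : BTree α) (hGi : Gi ∈ Gs) :
    Gi.leaves ⊆ P.leaves ∨ Gi.leaves ⊆ Q.leaves ∨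
      Disjoint Gi.leaves (P.leaves ∪ Q.leaves) := by
  obtain ⟨Gc, hGc, Gd, hGd, hcd, hsc, hsd⟩ := h2
  obtain ⟨Gw, hGw, hsw, hwi⟩ : ∃ Gw, Gw ∈ Gs ∧ Subtree Gw Q ∧ Gw ≠ Gi := by
    by_cases h : Gc = Gi
    · exact ⟨Gd, hGd, hsd, fun hh => hcd (h.trans hh.symm)⟩
    · exact ⟨Gc, hGc, hsc, h⟩
  obtain ⟨q, hq⟩ := aux_leaves_nonempty Gw
  have hqQ : q ∈ Q.leaves := aux_subtree_leaves hsw hq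
  have hqnotGi : q ∉ Gi.leaves := Finset.disjoint_left.1 (hdisj' Gw hGw Gi hGi hwi) hq
  rcases aux_nested_or_disjoint GInit Gi (node P Q) hndI (hsub Gi hGi) hx with hn | hn | hn
  · cases hn with
    | refl => exact absurd (Finset.mem_union_right _ hqQ) hqnotGi
    | left h' => exact Or.inl (aux_subtree_leaves h')
    | right h' => exact Or.inr (Or.inl (aux_subtree_leaves h'))
  · exact absurd (aux_subtree_leaves hn (Finset.mem_union_right _ hqQ)) hqnotGi
  · exact Or.inr (Or.inr hn)

end BTree
/-- if both child subtrees of `x` contain at least two trees of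
`𝒢`, then in any triplet-respecting supertree the node `y` with
`L(y) = L(x)` induces exactly the bipartition `(L(x_l), L(x_r))`. -/
theorem stmt9 {α : Type} [DecidableEq α] (GInit GTR : BTree α) (Gs : List (BTree α))
    (hndI : GInit.nodupLeaves) (hndT : GTR.nodupLeaves)
    (hsub : ∀ Gi ∈ Gs, BTree.Subtree Gi GInit)
    (hdisj : Gs.Pairwise fun a b => Disjoint a.leaves b.leaves)
    (hcover : BTree.unionLeaves Gs = GInit.leaves)
    (hleaves : GTR.leaves = GInit.leaves)
    (hdisp : ∀ Gi ∈ Gs, GTR.displays Gi)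
    (htrip : BTree.tripletRespecting GInit GTR Gs)
    (xl xr : BTree α) (hx : BTree.Subtree (BTree.node xl xr) GInit)
    (h2l : BTree.atLeastTwo Gs xl) (h2r : BTree.atLeastTwo Gs xr) :
    ∀ y, BTree.Subtree y GTR → y.leaves = (BTree.node xl xr).leaves →
      ∃ yl yr, y = BTree.node yl yr ∧
        ((yl.leaves = xl.leaves ∧ yr.leaves = xr.leaves) ∨
          (yl.leaves = xr.leaves ∧ yr.leaves = xl.leaves)) := by
  intro y hysub hyleaves
  have hdisj' : ∀ Gi ∈ Gs, ∀ Gj ∈ Gs, Gi ≠ Gj → Disjoint Gi.leaves Gj.leaves := by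
    intro Gi hGi Gj hGj hne
    haveI : Std.Symm (fun a b : BTree α => Disjoint a.leaves b.leaves) := ⟨fun _ _ h => h.symm⟩
    exact List.Pairwise.forall hdisj hGi hGj hne
  have hDx : Disjoint xl.leaves xr.leaves := (BTree.aux_nodup_subtree hx hndI).2.2
  cases y with
  | leaf a0 =>
    exfalso
    obtain ⟨Ga, hGa, Gb, hGb, hab, hsa, hsb⟩ := h2l
    obtain ⟨a1, ha1⟩ := BTree.aux_leaves_nonempty Ga
    obtain ⟨b1, hb1⟩ := BTree.aux_leaves_nonempty Gb
    have h1 : a1 ∈ (BTree.leaf a0 : BTree α).leaves := by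
      rw [hyleaves]
      exact Finset.mem_union_left _ (BTree.aux_subtree_leaves hsa ha1)
    have h2 : b1 ∈ (BTree.leaf a0 : BTree α).leaves := by
      rw [hyleaves]
      exact Finset.mem_union_left _ (BTree.aux_subtree_leaves hsb hb1)
    simp only [BTree.leaves, Finset.mem_singleton] at h1 h2
    subst h1; subst h2
    exact Finset.disjoint_left.1 (hdisj' Ga hGa Gb hGb hab) ha1 hb1
  | node yl yr =>
    refine ⟨yl, yr, rfl, ?_⟩
    have hDy : Disjoint yl.leaves yr.leaves := (BTree.aux_nodup_subtree hysub hndT).2.2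
    have hUy : yl.leaves ∪ yr.leaves = xl.leaves ∪ xr.leaves := hyleaves
    have hmemy : ∀ p, p ∈ xl.leaves ∪ xr.leaves → p ∈ yl.leaves ∨ p ∈ yr.leaves := by
      intro p hp
      rw [← hUy] at hp
      exact Finset.mem_union.1 hp
    have hfind : ∀ p ∈ xl.leaves ∪ xr.leaves, ∃ Gp ∈ Gs, p ∈ Gp.leaves := by
      intro p hp
      have hpI : p ∈ GInit.leaves :=
        BTree.aux_subtree_leaves hx (show p ∈ (BTree.node xl xr).leaves from hp)
      exact BTree.aux_mem_unionLeaves.1 (by rw [hcover]; exact hpI)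
    have bucketL : ∀ Gi ∈ Gs, ∀ p ∈ Gi.leaves, p ∈ xl.leaves → Gi.leaves ⊆ xl.leaves := by
      intro Gi hGi p hp hpxl
      rcases BTree.aux_bucket GInit Gs hndI hsub hdisj' xl xr hx h2r Gi hGi with h | h | h
      · exact h
      · exact absurd hpxl (Finset.disjoint_right.1 hDx (h hp))
      · exact absurd (Finset.mem_union_left _ hpxl) (Finset.disjoint_left.1 h hp)
    have bucketR : ∀ Gi ∈ Gs, ∀ p ∈ Gi.leaves, p ∈ xr.leaves → Gi.leaves ⊆ xr.leaves := by
      intro Gi hGi p hp hpxr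
      rcases BTree.aux_bucket GInit Gs hndI hsub hdisj' xl xr hx h2r Gi hGi with h | h | h
      · exact absurd hpxr (Finset.disjoint_left.1 hDx (h hp))
      · exact h
      · exact absurd (Finset.mem_union_right _ hpxr) (Finset.disjoint_left.1 h hp)
    obtain ⟨Gc0, hGc0, Gd0, hGd0, hcd0, hsc0, hsd0⟩ := h2r
    obtain ⟨Gc1, hGc1, Gd1, hGd1, hcd1, hsc1, hsd1⟩ := h2l
    have keyAd : ∀ a b Ga Gb, Ga ∈ Gs → Gb ∈ Gs → Ga ≠ Gb →
        a ∈ Ga.leaves → b ∈ Gb.leaves → a ∈ xl.leaves → b ∈ xl.leaves →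
        a ∈ yl.leaves → b ∈ yr.leaves → False := by
      intro a b Ga Gb hGa hGb hne ha hb haxl hbxl hayl hbyr
      obtain ⟨c, hc⟩ := BTree.aux_leaves_nonempty Gc0
      have hcxr : c ∈ xr.leaves := BTree.aux_subtree_leaves hsc0 hc
      have hac : Ga ≠ Gc0 := by
        intro h
        have hcGa : c ∈ Ga.leaves := by rw [h]; exact hc
        exact Finset.disjoint_left.1 hDx (bucketL Ga hGa a ha haxl hcGa) hcxr
      have hbc : Gb ≠ Gc0 := by
        intro h
        have hcGb : c ∈ Gb.leaves := by rw [h]; exact hc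
        exact Finset.disjoint_left.1 hDx (bucketL Gb hGb b hb hbxl hcGb) hcxr
      exact BTree.aux_key_contra GInit GTR xl xr yl yr hndI hndT hx hysub a b c
        (Or.inl ⟨haxl, hbxl, hcxr⟩) hayl hbyr
        (by rw [hUy]; exact Finset.mem_union_right _ hcxr)
        (htrip Ga hGa Gb hGb Gc0 hGc0 hne hac hbc a ha b hb c hc)
    have keyBd : ∀ a b Ga Gb, Ga ∈ Gs → Gb ∈ Gs → Ga ≠ Gb →
        a ∈ Ga.leaves → b ∈ Gb.leaves → a ∈ xr.leaves → b ∈ xr.leaves →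
        a ∈ yl.leaves → b ∈ yr.leaves → False := by
      intro a b Ga Gb hGa hGb hne ha hb haxr hbxr hayl hbyr
      obtain ⟨c, hc⟩ := BTree.aux_leaves_nonempty Gc1
      have hcxl : c ∈ xl.leaves := BTree.aux_subtree_leaves hsc1 hc
      have hac : Ga ≠ Gc1 := by
        intro h
        have hcGa : c ∈ Ga.leaves := by rw [h]; exact hc
        exact Finset.disjoint_left.1 hDx hcxl (bucketR Ga hGa a ha haxr hcGa)
      have hbc : Gb ≠ Gc1 := by
        intro h
        have hcGb : c ∈ Gb.leaves := by rw [h]; exact hc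
        exact Finset.disjoint_left.1 hDx hcxl (bucketR Gb hGb b hb hbxr hcGb)
      exact BTree.aux_key_contra GInit GTR xl xr yl yr hndI hndT hx hysub a b c
        (Or.inr ⟨haxr, hbxr, hcxl⟩) hayl hbyr
        (by rw [hUy]; exact Finset.mem_union_left _ hcxl)
        (htrip Ga hGa Gb hGb Gc1 hGc1 hne hac hbc a ha b hb c hc)
    have keyA : ∀ a b, a ∈ xl.leaves → b ∈ xl.leaves →
        a ∈ yl.leaves → b ∈ yr.leaves → False := by
      intro a b haxl hbxl hayl hbyr
      obtain ⟨Ga, hGa, ha⟩ := hfind a (Finset.mem_union_left _ haxl)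
      obtain ⟨Gb, hGb, hb⟩ := hfind b (Finset.mem_union_left _ hbxl)
      by_cases hne : Ga = Gb
      · subst hne
        obtain ⟨Gq, hGq, hsq, hqa⟩ : ∃ Gq, Gq ∈ Gs ∧ BTree.Subtree Gq xl ∧ Gq ≠ Ga := by
          by_cases h : Gc1 = Ga
          · exact ⟨Gd1, hGd1, hsd1, fun hh => hcd1 (h.trans hh.symm)⟩
          · exact ⟨Gc1, hGc1, hsc1, h⟩
        obtain ⟨q, hq⟩ := BTree.aux_leaves_nonempty Gq
        have hqxl : q ∈ xl.leaves := BTree.aux_subtree_leaves hsq hq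
        rcases hmemy q (Finset.mem_union_left _ hqxl) with hqy | hqy
        · exact keyAd q b Gq Ga hGq hGa hqa hq hb hqxl hbxl hqy hbyr
        · exact keyAd a q Ga Gq hGa hGq (fun h => hqa h.symm) ha hq haxl hqxl hayl hqy
      · exact keyAd a b Ga Gb hGa hGb hne ha hb haxl hbxl hayl hbyr
    have keyB : ∀ a b, a ∈ xr.leaves → b ∈ xr.leaves →
        a ∈ yl.leaves → b ∈ yr.leaves → False := by
      intro a b haxr hbxr hayl hbyr
      obtain ⟨Ga, hGa, ha⟩ := hfind a (Finset.mem_union_right _ haxr)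
      obtain ⟨Gb, hGb, hb⟩ := hfind b (Finset.mem_union_right _ hbxr)
      by_cases hne : Ga = Gb
      · subst hne
        obtain ⟨Gq, hGq, hsq, hqa⟩ : ∃ Gq, Gq ∈ Gs ∧ BTree.Subtree Gq xr ∧ Gq ≠ Ga := by
          by_cases h : Gc0 = Ga
          · exact ⟨Gd0, hGd0, hsd0, fun hh => hcd0 (h.trans hh.symm)⟩
          · exact ⟨Gc0, hGc0, hsc0, h⟩
        obtain ⟨q, hq⟩ := BTree.aux_leaves_nonempty Gq
        have hqxr : q ∈ xr.leaves := BTree.aux_subtree_leaves hsq hq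
        rcases hmemy q (Finset.mem_union_right _ hqxr) with hqy | hqy
        · exact keyBd q b Gq Ga hGq hGa hqa hq hb hqxr hbxr hqy hbyr
        · exact keyBd a q Ga Gq hGa hGq (fun h => hqa h.symm) ha hq haxr hqxr hayl hqy
      · exact keyBd a b Ga Gb hGa hGb hne ha hb haxr hbxr hayl hbyr
    have hxlside : xl.leaves ⊆ yl.leaves ∨ xl.leaves ⊆ yr.leaves := by
      by_contra h
      push_neg at h
      obtain ⟨b, hbxl, hbyl'⟩ := Finset.not_subset.1 h.1
      obtain ⟨a, haxl, hayr'⟩ := Finset.not_subset.1 h.2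
      have hayl : a ∈ yl.leaves :=
        (hmemy a (Finset.mem_union_left _ haxl)).resolve_right hayr'
      have hbyr : b ∈ yr.leaves :=
        (hmemy b (Finset.mem_union_left _ hbxl)).resolve_left hbyl'
      exact keyA a b haxl hbxl hayl hbyr
    have hxrside : xr.leaves ⊆ yl.leaves ∨ xr.leaves ⊆ yr.leaves := by
      by_contra h
      push_neg at h
      obtain ⟨b, hbxr, hbyl'⟩ := Finset.not_subset.1 h.1
      obtain ⟨a, haxr, hayr'⟩ := Finset.not_subset.1 h.2
      have hayl : a ∈ yl.leaves :=
        (hmemy a (Finset.mem_union_right _ haxr)).resolve_right hayr'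
      have hbyr : b ∈ yr.leaves :=
        (hmemy b (Finset.mem_union_right _ hbxr)).resolve_left hbyl'
      exact keyB a b haxr hbxr hayl hbyr
    rcases hxlside with h1 | h1 <;> rcases hxrside with h2 | h2
    · exfalso
      obtain ⟨q, hq⟩ := BTree.aux_leaves_nonempty yr
      have hqx : q ∈ xl.leaves ∪ xr.leaves := by
        rw [← hUy]; exact Finset.mem_union_right _ hq
      have hqyl : q ∈ yl.leaves := by
        rcases Finset.mem_union.1 hqx with h | h
        exacts [h1 h, h2 h]
      exact Finset.disjoint_left.1 hDy hqyl hq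
    · left
      constructor
      · refine Finset.Subset.antisymm ?_ h1
        intro t ht
        have htx : t ∈ xl.leaves ∪ xr.leaves := by
          rw [← hUy]; exact Finset.mem_union_left _ ht
        rcases Finset.mem_union.1 htx with h | h
        · exact h
        · exact absurd ht (Finset.disjoint_right.1 hDy (h2 h))
      · refine Finset.Subset.antisymm ?_ h2
        intro t ht
        have htx : t ∈ xl.leaves ∪ xr.leaves := by
          rw [← hUy]; exact Finset.mem_union_right _ ht
        rcases Finset.mem_union.1 htx with h | h
        · exact absurd ht (Finset.disjoint_left.1 hDy (h1 h))
        · exact h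
    · right
      constructor
      · refine Finset.Subset.antisymm ?_ h2
        intro t ht
        have htx : t ∈ xl.leaves ∪ xr.leaves := by
          rw [← hUy]; exact Finset.mem_union_left _ ht
        rcases Finset.mem_union.1 htx with h | h
        · exact absurd ht (Finset.disjoint_right.1 hDy (h1 h))
        · exact h
      · refine Finset.Subset.antisymm ?_ h1
        intro t ht
        have htx : t ∈ xl.leaves ∪ xr.leaves := by
          rw [← hUy]; exact Finset.mem_union_right _ ht
        rcases Finset.mem_union.1 htx with h | h
        · exact h
        · exact absurd ht (Finset.disjoint_left.1 hDy (h2 h))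
    · exfalso
      obtain ⟨q, hq⟩ := BTree.aux_leaves_nonempty yl
      have hqx : q ∈ xl.leaves ∪ xr.leaves := by
        rw [← hUy]; exact Finset.mem_union_left _ hq
      have hqyr : q ∈ yr.leaves := by
        rcases Finset.mem_union.1 hqx with h | h
        exacts [h1 h, h2 h]
      exact Finset.disjoint_left.1 hDy hq hqyr
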